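/- Let k = 3^α·5^β with α, β ≥ 0 and α + β ≥ 1. Assume s((ℤ/3ℤ)^3) ≤ 3·2·C(6,3)+1 and s((ℤ/5ℤ)^3) ≤ 5·4·C(6,3)+1 (which follow from Property D for these groups), and the subgroup inequality s(G) ≤ exp(G/H)(s(H)-1)+s(G/H). Then s((ℤ/kℤ)^3) ≤ 300k - 299. -/

import Mathlib

/-- The Erdős–Ginzburg–Ziv constant of a finite abelian group `A`. -/
noncomputable def EGZ (A : Type*) [AddCommMonoid A] : ℕ :=
  sInf {ℓ | ∀ S : Multiset A, ℓ ≤ Multiset.card S →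
    ∃ T ≤ S, Multiset.card T = AddMonoid.exponent A ∧ T.sum = 0}

lemma EGZ_set_subset {A B : Type*} [AddCommMonoid A] [AddCommMonoid B] (e : A ≃+ B) :
    {ℓ | ∀ S : Multiset A, ℓ ≤ Multiset.card S →
      ∃ T ≤ S, Multiset.card T = AddMonoid.exponent A ∧ T.sum = 0} ⊆
    {ℓ | ∀ S : Multiset B, ℓ ≤ Multiset.card S →
      ∃ T ≤ S, Multiset.card T = AddMonoid.exponent B ∧ T.sum = 0} := by
  intro ℓ hℓ S hS
  obtain ⟨T, hTS, hTcard, hTsum⟩ := hℓ (S.map e.symm) (by simpa using hS)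
  refine ⟨T.map e, ?_, ?_, ?_⟩
  · have := Multiset.map_le_map (f := e) hTS
    simpa [Multiset.map_map, Function.comp] using this
  · rw [Multiset.card_map, hTcard, AddMonoid.exponent_eq_of_addEquiv e]
  · rw [show Multiset.map (⇑e) T = Multiset.map (⇑e.toAddMonoidHom) T from rfl,
      ← e.toAddMonoidHom.map_multiset_sum, hTsum, map_zero]

lemma EGZ_congr {A B : Type*} [AddCommMonoid A] [AddCommMonoid B] (e : A ≃+ B) :
    EGZ A = EGZ B := by
  unfold EGZ
  congr 1
  exact le_antisymm (EGZ_set_subset e) (EGZ_set_subset e.symm)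

lemma exponent_pi3 (n : ℕ) : AddMonoid.exponent (Fin 3 → ZMod n) = n := by
  rw [AddMonoid.exponent_pi]
  show Finset.univ.lcm (fun _ : Fin 3 => AddMonoid.exponent (ZMod n)) = n
  rw [ZMod.exponent, show (Finset.univ : Finset (Fin 3)) = {0,1,2} from rfl]
  simp [Finset.lcm_insert, Nat.lcm_self, Nat.lcm]

lemma EGZ_trivial : EGZ (Fin 3 → ZMod 1) ≤ 1 := by
  apply Nat.sInf_le
  intro S hS
  obtain ⟨a, ha⟩ := Multiset.card_pos_iff_exists_mem.mp hS
  exact ⟨{a}, Multiset.singleton_le.mpr ha,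
    by rw [Multiset.card_singleton, exponent_pi3],
    by simp [Subsingleton.elim a 0]⟩

section
variable (p m : ℕ) [NeZero p] [NeZero m]

lemma key : (AddMonoidHom.mulLeft (p : ZMod (p*m))).comp (Int.castAddHom _) (m : ℤ) = 0 := by
  show (p : ZMod (p*m)) * ((m : ℤ) : ZMod (p*m)) = 0
  rw [show ((m : ℤ) : ZMod (p*m)) = ((m : ℕ) : ZMod (p*m)) by push_cast; ring,
    show ((p : ZMod (p*m)) * (m:ℕ) = ((p*m : ℕ) : ZMod (p*m))) by push_cast; ring]
  exact ZMod.natCast_self _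

noncomputable def psi : ZMod m →+ ZMod (p * m) :=
  ZMod.lift m ⟨_, key p m⟩

lemma psi_intCast (b : ℤ) : psi p m ((b : ℤ) : ZMod m) = (p : ZMod (p*m)) * b :=
  ZMod.lift_castAddHom (n := m) ⟨_, key p m⟩ b

lemma psi_natCast (b : ℕ) : psi p m (b : ZMod m) = ((p * b : ℕ) : ZMod (p * m)) := by
  have h := psi_intCast p m (b : ℤ)
  push_cast at h ⊢
  exact h

lemma psi_inj : Function.Injective (psi p m) := by
  rw [injective_iff_map_eq_zero]
  intro a ha
  rw [← ZMod.natCast_zmod_val a, psi_natCast, ZMod.natCast_eq_zero_iff] at ha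
  have hdvd : m ∣ a.val := (mul_dvd_mul_iff_left (a := p) (NeZero.ne p)).mp ha
  have hv : a.val = 0 := Nat.eq_zero_of_dvd_of_lt hdvd (ZMod.val_lt a)
  rw [← ZMod.natCast_zmod_val a, hv, Nat.cast_zero]

lemma psi_range (y : ZMod (p*m)) :
    (ZMod.castHom (⟨m, rfl⟩ : p ∣ p * m) (ZMod p)) y = 0 ↔ y ∈ Set.range (psi p m) := by
  have hy : ((y.val : ℕ) : ZMod (p*m)) = y := ZMod.natCast_zmod_val y
  constructor
  · intro h
    rw [← hy, map_natCast, ZMod.natCast_eq_zero_iff] at h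
    obtain ⟨b, hb⟩ := h
    exact ⟨(b : ZMod m), by rw [psi_natCast, ← hb, hy]⟩
  · rintro ⟨a, rfl⟩
    rw [← ZMod.natCast_zmod_val a, psi_natCast, map_natCast,
      ZMod.natCast_eq_zero_iff]
    exact ⟨a.val, rfl⟩

lemma EGZ_step
    (hsub : ∀ (G : Type) (_ : AddCommGroup G) (_ : Fintype G) (H : AddSubgroup G),
      AddMonoid.exponent G = AddMonoid.exponent H * AddMonoid.exponent (G ⧸ H) →
      EGZ G ≤ AddMonoid.exponent (G ⧸ H) * (EGZ H - 1) + EGZ (G ⧸ H)) :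
    EGZ (Fin 3 → ZMod (p * m)) ≤
      p * (EGZ (Fin 3 → ZMod m) - 1) + EGZ (Fin 3 → ZMod p) := by
  haveI : NeZero (p * m) := ⟨mul_ne_zero (NeZero.ne p) (NeZero.ne m)⟩
  set G := (Fin 3 → ZMod (p * m))
  let f : G →+ (Fin 3 → ZMod p) :=
    ((ZMod.castHom (⟨m, rfl⟩ : p ∣ p * m) (ZMod p)).toAddMonoidHom).compLeft (Fin 3)
  let Ψ : (Fin 3 → ZMod m) →+ G := (psi p m).compLeft (Fin 3)
  have hΨinj : Function.Injective Ψ := by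
    intro x y h
    funext i
    exact psi_inj p m (congrFun h i)
  have hfs : Function.Surjective f := by
    intro y
    refine ⟨fun i => (((y i).val : ℕ) : ZMod (p * m)), funext fun i => ?_⟩
    show (ZMod.castHom (⟨m, rfl⟩ : p ∣ p * m) (ZMod p)) (((y i).val : ℕ) : ZMod (p * m)) = y i
    rw [map_natCast, ZMod.natCast_zmod_val]
  have hrange : Ψ.range = f.ker := by
    ext x
    rw [AddMonoidHom.mem_ker]
    constructor
    · rintro ⟨a, rfl⟩
      funext i
      exact ((psi_range p m (psi p m (a i))).mpr ⟨a i, rfl⟩ : _)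
    · intro h
      have h' : ∀ i, x i ∈ Set.range (psi p m) :=
        fun i => (psi_range p m (x i)).mp (congrFun h i)
      choose a ha using h'
      exact ⟨a, funext ha⟩
  let e1 : (Fin 3 → ZMod m) ≃+ f.ker :=
    (AddMonoidHom.ofInjective hΨinj).trans (AddEquiv.addSubgroupCongr hrange)
  let e2 : G ⧸ f.ker ≃+ (Fin 3 → ZMod p) :=
    QuotientAddGroup.quotientKerEquivOfSurjective f hfs
  have expH : AddMonoid.exponent f.ker = m := by
    rw [← AddMonoid.exponent_eq_of_addEquiv e1, exponent_pi3]
  have expQ : AddMonoid.exponent (G ⧸ f.ker) = p := by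
    rw [AddMonoid.exponent_eq_of_addEquiv e2, exponent_pi3]
  have hcond : AddMonoid.exponent G =
      AddMonoid.exponent f.ker * AddMonoid.exponent (G ⧸ f.ker) := by
    rw [expH, expQ, exponent_pi3, mul_comm]
  have := hsub G inferInstance inferInstance f.ker hcond
  rwa [expQ, ← EGZ_congr e1, EGZ_congr e2] at this
end

lemma EGZ_main
    (h3' : EGZ (Fin 3 → ZMod 3) ≤ 121) (h5' : EGZ (Fin 3 → ZMod 5) ≤ 401)
    (hsub : ∀ (G : Type) (_ : AddCommGroup G) (_ : Fintype G) (H : AddSubgroup G),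
      AddMonoid.exponent G = AddMonoid.exponent H * AddMonoid.exponent (G ⧸ H) →
      EGZ G ≤ AddMonoid.exponent (G ⧸ H) * (EGZ H - 1) + EGZ (G ⧸ H)) :
    ∀ a b : ℕ, EGZ (Fin 3 → ZMod (3 ^ a * 5 ^ b)) ≤ 300 * (3 ^ a * 5 ^ b) - 299 := by
  intro a
  induction a with
  | zero =>
    intro b
    induction b with
    | zero => simpa using EGZ_trivial
    | succ b ih =>
      have hm : (0:ℕ) < 3 ^ 0 * 5 ^ b := by positivity
      haveI : NeZero ((3:ℕ) ^ 0 * 5 ^ b) := ⟨hm.ne'⟩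
      have hstep := EGZ_step 5 (3 ^ 0 * 5 ^ b) hsub
      rw [show (3:ℕ) ^ 0 * 5 ^ (b+1) = 5 * (3 ^ 0 * 5 ^ b) by ring]
      omega
  | succ a ih =>
    intro b
    have hm : (0:ℕ) < 3 ^ a * 5 ^ b := by positivity
    haveI : NeZero ((3:ℕ) ^ a * 5 ^ b) := ⟨hm.ne'⟩
    have hstep := EGZ_step 3 (3 ^ a * 5 ^ b) hsub
    have ihb := ih b
    rw [show (3:ℕ) ^ (a+1) * 5 ^ b = 3 * (3 ^ a * 5 ^ b) by ring]
    omega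

/-- For `k = 3^α·5^β` with `α + β ≥ 1`: assuming the bounds for `(ℤ/3ℤ)^3` and `(ℤ/5ℤ)^3`
(coming from Property D) and the subgroup inequality, `s((ℤ/kℤ)^3) ≤ 300k - 299`. -/
theorem EGZ_three_five (k α β : ℕ) (hk : k = 3 ^ α * 5 ^ β) (hαβ : 1 ≤ α + β)
    (h3 : EGZ (Fin 3 → ZMod 3) ≤ 3 * 2 * Nat.choose 6 3 + 1)
    (h5 : EGZ (Fin 3 → ZMod 5) ≤ 5 * 4 * Nat.choose 6 3 + 1)
    (hsub : ∀ (G : Type) (_ : AddCommGroup G) (_ : Fintype G) (H : AddSubgroup G),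
      AddMonoid.exponent G = AddMonoid.exponent H * AddMonoid.exponent (G ⧸ H) →
      EGZ G ≤ AddMonoid.exponent (G ⧸ H) * (EGZ H - 1) + EGZ (G ⧸ H)) :
    EGZ (Fin 3 → ZMod k) ≤ 300 * k - 299 := by
  subst hk
  have hc : Nat.choose 6 3 = 20 := by decide
  exact EGZ_main (by simpa [hc] using h3) (by simpa [hc] using h5) hsub α β
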